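/- arXiv:2403.04348 — 3 statements merged into one kernel-verified Lean document; each statement's English description precedes it below -/
import Mathlib

section
/- Bound on the dual update (intermediate claim in the proof of Theorem 1): under the setup in the context, E‖u⁺ − u⋆‖²_X ≤ ‖u − u⋆‖²_X + pλ²(1 + 2ω)‖Wx̂‖²_X − 2pλ⟨u − u⋆, x̂⟩_X. -/
open MeasureTheory ProbabilityTheory Finset RealInnerProductSpace

section Aux

variable {E : Type*} [NormedAddCommGroup E] [InnerProductSpace ℝ E]

/-- Pointwise expansion of the squared distance after the update. -/
lemma aux_expand {n : ℕ} (hn : 1 ≤ n) (lam : ℝ) (v : Fin n → E) (w : E)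
    (hv : ∑ i, v i + (n : ℝ) • w = 0) (Di : Fin n → E) :
    ∑ i, ‖v i + lam • ((1 / (2 * (n : ℝ))) • ∑ j, Di j - Di i)‖ ^ 2
      + (n : ℝ) * ‖w + lam • ((1 / (2 * (n : ℝ))) • ∑ j, Di j)‖ ^ 2
    = (∑ i, ‖v i‖ ^ 2 + (n : ℝ) * ‖w‖ ^ 2)
      + (-2 * lam * ∑ i, ⟪v i, Di i⟫
        + lam ^ 2 * (∑ i, ‖Di i‖ ^ 2 - (1 / (2 * (n : ℝ))) * ‖∑ j, Di j‖ ^ 2)) := by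
  have hn0 : (n : ℝ) ≠ 0 := by positivity
  set s : E := ∑ j, Di j with hs
  set b : E := (1 / (2 * (n : ℝ))) • s with hb
  have hbs : ⟪b, s⟫ = (1 / (2 * (n : ℝ))) * ‖s‖ ^ 2 := by
    rw [hb, real_inner_smul_left, real_inner_self_eq_norm_sq]
  have hbb : ‖b‖ ^ 2 = (1 / (2 * (n : ℝ))) ^ 2 * ‖s‖ ^ 2 := by
    rw [hb, norm_smul, mul_pow]
    congr 1
    rw [Real.norm_eq_abs, sq_abs]
  have h1 : ∀ i, ‖v i + lam • (b - Di i)‖ ^ 2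
      = ‖v i‖ ^ 2 + 2 * lam * (⟪v i, b⟫ - ⟪v i, Di i⟫)
        + lam ^ 2 * (‖b‖ ^ 2 - 2 * ⟪b, Di i⟫ + ‖Di i‖ ^ 2) := by
    intro i
    rw [norm_add_sq_real, real_inner_smul_right, norm_smul, mul_pow, inner_sub_right,
      norm_sub_sq_real, Real.norm_eq_abs, sq_abs]
    ring
  have h2 : ‖w + lam • b‖ ^ 2 = ‖w‖ ^ 2 + 2 * lam * ⟪w, b⟫ + lam ^ 2 * ‖b‖ ^ 2 := by
    rw [norm_add_sq_real, real_inner_smul_right, norm_smul, mul_pow, Real.norm_eq_abs, sq_abs]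
    ring
  have hcross : ∑ i, ⟪v i, b⟫ + (n : ℝ) * ⟪w, b⟫ = 0 := by
    have : ⟪∑ i, v i + (n : ℝ) • w, b⟫ = (0 : ℝ) := by rw [hv, inner_zero_left]
    rw [inner_add_left, sum_inner, real_inner_smul_left] at this
    linarith
  have hsumb : ∑ i, ⟪b, Di i⟫ = (1 / (2 * (n : ℝ))) * ‖s‖ ^ 2 := by
    rw [← inner_sum, ← hs, hbs]
  have hquad : (n : ℝ) * ‖b‖ ^ 2 - 2 * (∑ i, ⟪b, Di i⟫) + (n : ℝ) * ‖b‖ ^ 2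
      = -(1 / (2 * (n : ℝ))) * ‖s‖ ^ 2 := by
    rw [hbb, hsumb]
    field_simp
    ring
  simp only [h1, h2, Finset.sum_add_distrib, Finset.sum_sub_distrib, ← Finset.mul_sum,
    Finset.sum_const, card_univ, Fintype.card_fin, nsmul_eq_mul]
  linear_combination (2 * lam) * hcross + lam ^ 2 * hquad

variable {E : Type*} [NormedAddCommGroup E] [InnerProductSpace ℝ E]

/-- The squared norm of `W x̂` in terms of `x̂ᵢ - ŷ`. -/
lemma aux_W {n : ℕ} (hn : 1 ≤ n) (xhat : Fin n → E) (yhat xb : E)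
    (hxb : xb = (1 / (2 * (n : ℝ))) • (∑ i, xhat i + (n : ℝ) • yhat)) :
    ∑ i, ‖xhat i - xb‖ ^ 2 + (n : ℝ) * ‖yhat - xb‖ ^ 2
      = ∑ i, ‖xhat i - yhat‖ ^ 2
        - (1 / (2 * (n : ℝ))) * ‖∑ i, (xhat i - yhat)‖ ^ 2 := by
  have hn0 : (n : ℝ) ≠ 0 := by positivity
  set A : E := ∑ i, (xhat i - yhat) with hA
  set ab : E := (1 / (2 * (n : ℝ))) • A with hab
  have hxb' : xb = ab + yhat := by
    rw [hxb, hab, hA, Finset.sum_sub_distrib, Finset.sum_const, card_univ, Fintype.card_fin]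
    match_scalars <;> (field_simp; try ring)
  have h1 : ∀ i, xhat i - xb = (xhat i - yhat) - ab := by
    intro i; rw [hxb']; abel
  have h2 : yhat - xb = -ab := by rw [hxb']; abel
  have habA : ⟪ab, A⟫ = (1 / (2 * (n : ℝ))) * ‖A‖ ^ 2 := by
    rw [hab, real_inner_smul_left, real_inner_self_eq_norm_sq]
  have habab : ‖ab‖ ^ 2 = (1 / (2 * (n : ℝ))) ^ 2 * ‖A‖ ^ 2 := by
    rw [hab, norm_smul, mul_pow, Real.norm_eq_abs, sq_abs]
  have hAab : ⟪A, ab⟫ = (1 / (2 * (n : ℝ))) * ‖A‖ ^ 2 := by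
    rw [real_inner_comm]; exact habA
  have hsumA : ∑ i, ⟪xhat i - yhat, ab⟫ = ⟪A, ab⟫ := by rw [hA, sum_inner]
  have h3 : ∀ i, ‖(xhat i - yhat) - ab‖ ^ 2
      = ‖xhat i - yhat‖ ^ 2 - 2 * ⟪xhat i - yhat, ab⟫ + ‖ab‖ ^ 2 :=
    fun i => norm_sub_sq_real _ _
  simp only [h1, h2, h3, norm_neg, Finset.sum_add_distrib, Finset.sum_sub_distrib,
    ← Finset.mul_sum, Finset.sum_const, card_univ, Fintype.card_fin, nsmul_eq_mul,
    hsumA, hAab, habab]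
  field_simp
  ring

/-- Cross-term identity using `∑ vᵢ + n w = 0`. -/
lemma aux_cross {n : ℕ} (v : Fin n → E) (w : E) (hv : ∑ i, v i + (n : ℝ) • w = 0)
    (xhat : Fin n → E) (yhat : E) :
    ∑ i, ⟪v i, xhat i - yhat⟫ = ∑ i, ⟪v i, xhat i⟫ + (n : ℝ) * ⟪w, yhat⟫ := by
  have h : ⟪∑ i, v i + (n : ℝ) • w, yhat⟫ = (0 : ℝ) := by rw [hv, inner_zero_left]
  rw [inner_add_left, sum_inner, real_inner_smul_left] at h
  simp only [inner_sub_right, Finset.sum_sub_distrib]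
  linarith

/-- Jensen: `‖E f‖² ≤ E ‖f‖²` for `f ∈ L²` on a probability space. -/
lemma aux_jensen {Ω : Type*} [MeasurableSpace Ω] {P : Measure Ω} [IsProbabilityMeasure P]
    [CompleteSpace E] {f : Ω → E} (hf : MemLp f 2 P) :
    ‖∫ t, f t ∂P‖ ^ 2 ≤ ∫ t, ‖f t‖ ^ 2 ∂P := by
  set m := ∫ t, f t ∂P with hm
  have hfi : Integrable f P := hf.integrable one_le_two
  have hsq : Integrable (fun t => ‖f t‖ ^ 2) P := hf.norm.integrable_sq
  have hin : Integrable (fun t => ⟪f t, m⟫) P := hfi.inner_const m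
  have h0 : (0 : ℝ) ≤ ∫ t, ‖f t - m‖ ^ 2 ∂P := integral_nonneg fun t => sq_nonneg _
  have hexp : ∫ t, ‖f t - m‖ ^ 2 ∂P = (∫ t, ‖f t‖ ^ 2 ∂P) - ‖m‖ ^ 2 := by
    have h1 : ∀ t, ‖f t - m‖ ^ 2 = ‖f t‖ ^ 2 - 2 * ⟪f t, m⟫ + ‖m‖ ^ 2 :=
      fun t => norm_sub_sq_real _ _
    simp only [h1]
    have hsub : Integrable (fun t => ‖f t‖ ^ 2 - 2 * ⟪f t, m⟫) P := by
      exact hsq.sub (hin.const_mul 2)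
    rw [integral_add hsub (integrable_const _),
      integral_sub hsq (hin.const_mul 2), integral_const_mul, integral_const, probReal_univ,
      one_smul]
    have h2 : ∫ t, ⟪f t, m⟫ ∂P = ‖m‖ ^ 2 := by
      have h3 : ∀ t, ⟪f t, m⟫ = ⟪m, f t⟫ := fun t => real_inner_comm _ _
      simp only [h3]
      rw [integral_inner (𝕜 := ℝ) hfi m, ← hm, real_inner_self_eq_norm_sq]
    rw [h2]
    ring
  linarith [hexp ▸ h0]


end Aux

set_option maxHeartbeats 1000000 in
/-- Bound on the dual update (intermediate claim in the proof of Theorem 1).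
Elements of the weighted product space `X = (ℝ^d)^{n+1}` are encoded as pairs:
`u = (uf, ul)`, `u⋆ = (usf, usl)`, `x̂ = (xhat, yhat)`, with
`⟨(a, b), (a', b')⟩_X = ∑ i ⟨a i, a' i⟩ + n ⟨b, b'⟩`. The condition `S u = 0` reads
`∑ i uf i + n ul = 0`; `D = (D_1, …, D_n, 0)`, `D̄ = (1/(2n)) ∑ j D j`, and on `{θ = 1}`
the update `u⁺ = u - λ W D` reads `uf⁺ i = uf i + λ (D̄ - D i)`, `ul⁺ = ul + λ D̄`. -/
theorem stmt11 {d n : ℕ} (hd : 1 ≤ d) (hn : 1 ≤ n)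
    (ω p lam : ℝ) (hω : 0 ≤ ω) (hp0 : 0 < p) (hp1 : p ≤ 1) (hlam : 0 < lam)
    (uf usf : Fin n → EuclideanSpace ℝ (Fin d)) (ul usl : EuclideanSpace ℝ (Fin d))
    (hu0 : ∑ i, uf i + (n : ℝ) • ul = 0)
    (hus0 : ∑ i, usf i + (n : ℝ) • usl = 0)
    (xhat : Fin n → EuclideanSpace ℝ (Fin d)) (yhat : EuclideanSpace ℝ (Fin d))
    (xb : EuclideanSpace ℝ (Fin d))
    (hxb : xb = (1 / (2 * (n : ℝ))) • (∑ i, xhat i + (n : ℝ) • yhat))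
    {Ω : Type*} [MeasurableSpace Ω] (P : Measure Ω) [IsProbabilityMeasure P]
    (D : Fin n → Ω → EuclideanSpace ℝ (Fin d))
    (hD2 : ∀ i, MemLp (D i) 2 P)
    (hDmean : ∀ i, ∫ t, D i t ∂P = xhat i - yhat)
    (hDvar : ∑ i, ∫ t, ‖D i t‖ ^ 2 ∂P ≤ (1 + ω) * ∑ i, ‖xhat i - yhat‖ ^ 2)
    (θ : Ω → Bool) (hθmeas : Measurable θ)
    (hθp : P {t | θ t = true} = ENNReal.ofReal p)
    (hindep : IndepFun θ (fun t i => D i t) P)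
    (Dbar : Ω → EuclideanSpace ℝ (Fin d))
    (hDbar : ∀ t, Dbar t = (1 / (2 * (n : ℝ))) • ∑ j, D j t)
    (ufp : Fin n → Ω → EuclideanSpace ℝ (Fin d)) (ulp : Ω → EuclideanSpace ℝ (Fin d))
    (hufp : ∀ i t, ufp i t = if θ t then uf i + lam • (Dbar t - D i t) else uf i)
    (hulp : ∀ t, ulp t = if θ t then ul + lam • Dbar t else ul) :
    ∫ t, (∑ i, ‖ufp i t - usf i‖ ^ 2 + (n : ℝ) * ‖ulp t - usl‖ ^ 2) ∂P ≤
      (∑ i, ‖uf i - usf i‖ ^ 2 + (n : ℝ) * ‖ul - usl‖ ^ 2) +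
        p * lam ^ 2 * (1 + 2 * ω) *
          (∑ i, ‖xhat i - xb‖ ^ 2 + (n : ℝ) * ‖yhat - xb‖ ^ 2) -
        2 * p * lam *
          (∑ i, ⟪uf i - usf i, xhat i⟫ + (n : ℝ) * ⟪ul - usl, yhat⟫) := by
  have hn0 : (n : ℝ) ≠ 0 := by positivity
  set c : ℝ := 1 / (2 * (n : ℝ)) with hc
  have hcpos : 0 < c := by rw [hc]; positivity
  -- the constraint on u - u⋆
  have hv : ∑ i, (uf i - usf i) + (n : ℝ) • (ul - usl) = 0 := by
    have h : (∑ i, uf i + (n : ℝ) • ul) - (∑ i, usf i + (n : ℝ) • usl) = 0 := by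
      rw [hu0, hus0, sub_zero]
    rw [← h, Finset.sum_sub_distrib, smul_sub]
    abel
  -- abbreviations
  set N : ℝ := ∑ i, ‖uf i - usf i‖ ^ 2 + (n : ℝ) * ‖ul - usl‖ ^ 2 with hN
  set K : ℝ := ∑ i, ⟪uf i - usf i, xhat i - yhat⟫ with hK
  set S : ℝ := ∑ i, ‖xhat i - yhat‖ ^ 2 with hS
  set G : Ω → ℝ := fun t => -2 * lam * (∑ i, ⟪uf i - usf i, D i t⟫)
    + lam ^ 2 * (∑ i, ‖D i t‖ ^ 2 - c * ‖∑ j, D j t‖ ^ 2) with hG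
  set χ : Ω → ℝ := fun t => if θ t then 1 else 0 with hχ
  set sθ : Set Ω := {t | θ t = true} with hsθ
  have hmeasS : MeasurableSet sθ := hθmeas (measurableSet_singleton true)
  -- pointwise identity
  have hpt : ∀ t, ∑ i, ‖ufp i t - usf i‖ ^ 2 + (n : ℝ) * ‖ulp t - usl‖ ^ 2
      = N + χ t * G t := by
    intro t
    by_cases hth : θ t
    · have h1 : ∀ i, ufp i t - usf i
          = (uf i - usf i) + lam • (c • ∑ j, D j t - D i t) := by
        intro i; rw [hufp, if_pos hth, hDbar]; abel
      have h2 : ulp t - usl = (ul - usl) + lam • (c • ∑ j, D j t) := by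
        rw [hulp, if_pos hth, hDbar]; abel
      simp only [h1, h2, hχ, if_pos hth, one_mul, hG, hN, hc]
      exact aux_expand hn lam _ _ hv (fun i => D i t)
    · simp only [hufp, hulp, if_neg hth, hχ, hG, hN]
      simp [hth]
  -- integrability
  have hDint : ∀ i, Integrable (D i) P := fun i => (hD2 i).integrable one_le_two
  have hsumD : MemLp (fun t => ∑ j, D j t) 2 P :=
    memLp_finset_sum univ fun j _ => hD2 j
  have hInt1 : Integrable (fun t => ∑ i, ⟪uf i - usf i, D i t⟫) P :=
    integrable_finset_sum _ fun i _ => (hDint i).const_inner _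
  have hInt2 : ∀ i, Integrable (fun t => ‖D i t‖ ^ 2) P :=
    fun i => (hD2 i).norm.integrable_sq
  have hInt3 : Integrable (fun t => ‖∑ j, D j t‖ ^ 2) P := hsumD.norm.integrable_sq
  have hInt4 : Integrable (fun t => ∑ i, ‖D i t‖ ^ 2 - c * ‖∑ j, D j t‖ ^ 2) P := by
    exact (integrable_finset_sum _ fun i _ => hInt2 i).sub (hInt3.const_mul _)
  have hGint : Integrable G P := by
    rw [hG]
    apply Integrable.add
    · exact hInt1.const_mul _
    · exact hInt4.const_mul _
  have hχind : χ = sθ.indicator (fun _ => (1 : ℝ)) := by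
    funext t
    by_cases hth : θ t <;> simp [hχ, hsθ, Set.indicator_apply, hth]
  have hχint : Integrable χ P := by
    rw [hχind]; exact (integrable_const 1).indicator hmeasS
  have hχGint : Integrable (fun t => χ t * G t) P := by
    have h : (fun t => χ t * G t) = sθ.indicator G := by
      funext t
      by_cases hth : θ t <;> simp [hχ, hsθ, Set.indicator_apply, hth]
    rw [h]; exact hGint.indicator hmeasS
  -- independence
  have hψ : Measurable (fun y : Fin n → EuclideanSpace ℝ (Fin d) =>
      -2 * lam * (∑ i, ⟪uf i - usf i, y i⟫)
        + lam ^ 2 * (∑ i, ‖y i‖ ^ 2 - c * ‖∑ j, y j‖ ^ 2)) := by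
    apply Continuous.measurable
    apply Continuous.add
    · exact continuous_const.mul
        (continuous_finset_sum _ fun i _ => continuous_const.inner (continuous_apply i))
    · exact continuous_const.mul
        ((continuous_finset_sum _ fun i _ => ((continuous_apply i).norm.pow 2)).sub
          (continuous_const.mul
            ((continuous_finset_sum _ fun j _ => continuous_apply j).norm.pow 2)))
  have hφ : Measurable (fun b : Bool => if b then (1 : ℝ) else 0) := Measurable.of_discrete
  have hindepχG : IndepFun χ G P := by
    have h := hindep.comp hφ hψ
    exact h
  have hmul : ∫ t, χ t * G t ∂P = (∫ t, χ t ∂P) * ∫ t, G t ∂P :=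
    hindepχG.integral_mul_eq_mul_integral hχint.1 hGint.1
  have hχval : ∫ t, χ t ∂P = p := by
    rw [hχind, integral_indicator_const (1 : ℝ) hmeasS, measureReal_def, hθp, smul_eq_mul, mul_one,
      ENNReal.toReal_ofReal hp0.le]
  -- value of ∫ G
  have hGval : ∫ t, G t ∂P
      = -2 * lam * K + lam ^ 2 * ((∑ i, ∫ t, ‖D i t‖ ^ 2 ∂P) - c * ∫ t, ‖∑ j, D j t‖ ^ 2 ∂P) := by
    rw [hG]
    rw [integral_add (hInt1.const_mul _) (hInt4.const_mul _),
      integral_const_mul, integral_const_mul,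
      integral_sub (integrable_finset_sum _ fun i _ => hInt2 i) (hInt3.const_mul _),
      integral_const_mul, integral_finset_sum _ fun i _ => (hDint i).const_inner _,
      integral_finset_sum _ fun i _ => hInt2 i]
    have h : ∀ i : Fin n, ∫ t, ⟪uf i - usf i, D i t⟫ ∂P = ⟪uf i - usf i, xhat i - yhat⟫ := by
      intro i
      rw [integral_inner (𝕜 := ℝ) (hDint i), hDmean i]
    simp only [h, hK]
  -- total integral
  have hintegral : ∫ t, (∑ i, ‖ufp i t - usf i‖ ^ 2 + (n : ℝ) * ‖ulp t - usl‖ ^ 2) ∂P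
      = N + p * ∫ t, G t ∂P := by
    simp only [hpt]
    rw [integral_add (integrable_const N) hχGint, integral_const, probReal_univ,
      one_smul, hmul, hχval]
  -- bound quantities
  have hA : ∫ t, (∑ j, D j t) ∂P = ∑ i, (xhat i - yhat) := by
    rw [integral_finset_sum _ fun i _ => hDint i]
    exact Finset.sum_congr rfl fun i _ => hDmean i
  have hVlow : ‖∑ i, (xhat i - yhat)‖ ^ 2 ≤ ∫ t, ‖∑ j, D j t‖ ^ 2 ∂P := by
    have h := aux_jensen hsumD
    rwa [hA] at h
  have hCS : ‖∑ i, (xhat i - yhat)‖ ^ 2 ≤ (n : ℝ) * S := by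
    have h1 : ‖∑ i, (xhat i - yhat)‖ ≤ ∑ i, ‖xhat i - yhat‖ := norm_sum_le _ _
    have h2 : (∑ i, ‖xhat i - yhat‖) ^ 2 ≤ (n : ℝ) * ∑ i, ‖xhat i - yhat‖ ^ 2 := by
      have h := sq_sum_le_card_mul_sum_sq (s := (univ : Finset (Fin n)))
        (f := fun i => ‖xhat i - yhat‖)
      simpa using h
    calc ‖∑ i, (xhat i - yhat)‖ ^ 2 ≤ (∑ i, ‖xhat i - yhat‖) ^ 2 :=
          pow_le_pow_left₀ (norm_nonneg _) h1 2
      _ ≤ (n : ℝ) * S := h2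
  have hW : ∑ i, ‖xhat i - xb‖ ^ 2 + (n : ℝ) * ‖yhat - xb‖ ^ 2
      = S - c * ‖∑ i, (xhat i - yhat)‖ ^ 2 := aux_W hn xhat yhat xb hxb
  have hKsplit : K = ∑ i, ⟪uf i - usf i, xhat i⟫ + (n : ℝ) * ⟪ul - usl, yhat⟫ :=
    aux_cross _ _ hv xhat yhat
  -- final assembly
  rw [hintegral, hGval, hW, ← hKsplit]
  set A2 : ℝ := ‖∑ i, (xhat i - yhat)‖ ^ 2 with hA2
  set T : ℝ := ∑ i, ∫ t, ‖D i t‖ ^ 2 ∂P with hT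
  set V : ℝ := ∫ t, ‖∑ j, D j t‖ ^ 2 ∂P with hV
  have hTle : T ≤ (1 + ω) * S := hDvar
  have h2c : 2 * c * A2 ≤ S := by
    rw [hc]
    have : 2 * (1 / (2 * (n : ℝ))) = ((n : ℝ))⁻¹ := by field_simp
    rw [this, inv_mul_le_iff₀ (by positivity)]
    rwa [hA2]
  have step1 : T - c * V ≤ (1 + ω) * S - c * A2 := by
    have h := mul_le_mul_of_nonneg_left hVlow hcpos.le
    linarith
  have step2 : (1 + ω) * S - c * A2 ≤ (1 + 2 * ω) * (S - c * A2) := by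
    nlinarith [mul_nonneg hω (sub_nonneg.2 h2c)]
  have step3 : p * (lam ^ 2 * (T - c * V)) ≤ p * (lam ^ 2 * ((1 + 2 * ω) * (S - c * A2))) :=
    mul_le_mul_of_nonneg_left
      (mul_le_mul_of_nonneg_left (step1.trans step2) (sq_nonneg lam)) hp0.le
  linarith [step3]
end

section
/- Bound on the primal update (intermediate claim in the proof of Theorem 1): under the setup in the context, E‖x⁺ − 1x⋆‖²_X ≤ ‖x̂ − 1x⋆‖²_X − (2ρ − ρ²(1 + ω_av))·‖Wx̂‖²_X. -/
open MeasureTheory Finset RealInnerProductSpace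

set_option maxHeartbeats 1000000 in
/-- Bound on the primal update (intermediate claim in the proof of Theorem 1).
Elements of the weighted product space `X = (ℝ^d)^{n+1}` are encoded as pairs:
`x̂ = (xhat, yhat)` with norm `‖(a, b)‖²_X = ∑ i ‖a i‖² + n ‖b‖²`, barycenter
`x̄ = (1/(2n))(∑ i xhat i + n yhat)`, `D̄ = (1/(2n)) ∑ j D j`, and the update
`x⁺ = (1 - ρ) x̂ + ρ 1(ŷ + D̄)` componentwise. -/
theorem stmt12 {d n : ℕ} (hd : 1 ≤ d) (hn : 1 ≤ n)
    (ωav ρ : ℝ) (hωav : 0 ≤ ωav)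
    (xhat : Fin n → EuclideanSpace ℝ (Fin d)) (yhat xs : EuclideanSpace ℝ (Fin d))
    (xb : EuclideanSpace ℝ (Fin d))
    (hxb : xb = (1 / (2 * (n : ℝ))) • (∑ i, xhat i + (n : ℝ) • yhat))
    {Ω : Type*} [MeasurableSpace Ω] (P : Measure Ω) [IsProbabilityMeasure P]
    (D : Fin n → Ω → EuclideanSpace ℝ (Fin d))
    (hD2 : ∀ i, MemLp (D i) 2 P)
    (hDmean : ∀ i, ∫ t, D i t ∂P = xhat i - yhat)
    (Dbar : Ω → EuclideanSpace ℝ (Fin d))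
    (hDbar : ∀ t, Dbar t = (1 / (2 * (n : ℝ))) • ∑ j, D j t)
    (hDbarVar : ∫ t, ‖Dbar t - ∫ s, Dbar s ∂P‖ ^ 2 ∂P ≤
      (ωav / (4 * (n : ℝ))) * ∑ i, ‖xhat i - yhat‖ ^ 2)
    (xfp : Fin n → Ω → EuclideanSpace ℝ (Fin d)) (xlp : Ω → EuclideanSpace ℝ (Fin d))
    (hxfp : ∀ i t, xfp i t = (1 - ρ) • xhat i + ρ • (yhat + Dbar t))
    (hxlp : ∀ t, xlp t = (1 - ρ) • yhat + ρ • (yhat + Dbar t)) :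
    ∫ t, (∑ i, ‖xfp i t - xs‖ ^ 2 + (n : ℝ) * ‖xlp t - xs‖ ^ 2) ∂P ≤
      (∑ i, ‖xhat i - xs‖ ^ 2 + (n : ℝ) * ‖yhat - xs‖ ^ 2) -
        (2 * ρ - ρ ^ 2 * (1 + ωav)) *
          (∑ i, ‖xhat i - xb‖ ^ 2 + (n : ℝ) * ‖yhat - xb‖ ^ 2) := by
  have hn0 : (n : ℝ) ≠ 0 := by positivity
  have hnpos : (0:ℝ) < n := by exact_mod_cast hn
  -- abbreviations
  set V : Ω → EuclideanSpace ℝ (Fin d) := fun t => Dbar t - (xb - yhat) with hV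
  set a : Fin n → EuclideanSpace ℝ (Fin d) :=
    fun i => (xhat i - xs) - ρ • (xhat i - xb) with ha
  set b : EuclideanSpace ℝ (Fin d) := (yhat - xs) - ρ • (yhat - xb) with hb
  set c : EuclideanSpace ℝ (Fin d) := (∑ i, a i) + (n:ℝ) • b with hc
  set Cst : ℝ := ∑ i, ‖a i‖ ^ 2 + (n:ℝ) * ‖b‖ ^ 2 with hCst
  -- integrability facts
  have hDint : ∀ j, Integrable (D j) P := fun j => (hD2 j).integrable one_le_two
  have hDbarL2 : MemLp Dbar 2 P := by
    have : Dbar = (1 / (2 * (n:ℝ))) • (∑ j, D j) := by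
      funext t; rw [hDbar]; simp
    rw [this]
    exact (memLp_finset_sum' _ (fun j _ => hD2 j)).const_smul _
  have hDbarInt : Integrable Dbar P := hDbarL2.integrable one_le_two
  have hVL2 : MemLp V 2 P := hDbarL2.sub (memLp_const _)
  have hVint : Integrable V P := hVL2.integrable one_le_two
  have hV2int : Integrable (fun t => ‖V t‖ ^ 2) P := hVL2.norm.integrable_sq
  have hInnerInt : Integrable (fun t => ⟪c, V t⟫) P := hVint.const_inner c
  -- mean of Dbar
  have hDbarMean : ∫ t, Dbar t ∂P = xb - yhat := by
    have h1 : ∫ t, Dbar t ∂P = (1 / (2 * (n:ℝ))) • ∑ j, (xhat j - yhat) := by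
      simp_rw [hDbar]
      rw [integral_smul, integral_finset_sum _ (fun j _ => hDint j)]
      congr 1
      exact Finset.sum_congr rfl fun j _ => hDmean j
    rw [h1, hxb]
    rw [Finset.sum_sub_distrib, Finset.sum_const, Finset.card_univ, Fintype.card_fin]
    match_scalars <;> field_simp <;> ring
  have hVmean : ∫ t, V t ∂P = 0 := by
    rw [hV]
    rw [integral_sub hDbarInt (integrable_const _), integral_const, hDbarMean]
    simp
  have hVvar : ∫ t, ‖V t‖ ^ 2 ∂P ≤ (ωav / (4 * (n:ℝ))) * ∑ i, ‖xhat i - yhat‖ ^ 2 := by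
    have := hDbarVar
    rw [hDbarMean] at this
    exact this
  -- pointwise identity
  have hpt : ∀ t, (∑ i, ‖xfp i t - xs‖ ^ 2 + (n : ℝ) * ‖xlp t - xs‖ ^ 2)
      = Cst + (2*ρ) * ⟪c, V t⟫ + (2*(n:ℝ)*ρ^2) * ‖V t‖ ^ 2 := by
    intro t
    have h1 : ∀ i, ‖xfp i t - xs‖ ^ 2
        = ‖a i‖ ^ 2 + (2*ρ) * ⟪a i, V t⟫ + ρ^2 * ‖V t‖ ^ 2 := by
      intro i
      have e : xfp i t - xs = a i + ρ • V t := by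
        rw [hxfp, ha, hV]; module
      rw [e, norm_add_sq_real, real_inner_smul_right, norm_smul, Real.norm_eq_abs,
        mul_pow, sq_abs]
      ring
    have h2 : ‖xlp t - xs‖ ^ 2
        = ‖b‖ ^ 2 + (2*ρ) * ⟪b, V t⟫ + ρ^2 * ‖V t‖ ^ 2 := by
      have e : xlp t - xs = b + ρ • V t := by
        rw [hxlp, hb, hV]; module
      rw [e, norm_add_sq_real, real_inner_smul_right, norm_smul, Real.norm_eq_abs,
        mul_pow, sq_abs]
      ring
    have hsi : ⟪(∑ i, a i), V t⟫ = ∑ i, ⟪a i, V t⟫ := sum_inner _ _ _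
    have hci : ⟪c, V t⟫ = ∑ i, ⟪a i, V t⟫ + (n:ℝ) * ⟪b, V t⟫ := by
      rw [hc, inner_add_left, real_inner_smul_left, hsi]
    rw [Finset.sum_congr rfl (fun i _ => h1 i), h2, hCst]
    rw [Finset.sum_add_distrib, Finset.sum_add_distrib, Finset.sum_const,
      Finset.card_univ, Fintype.card_fin, ← Finset.mul_sum, hci]
    push_cast
    ring
  -- compute the integral
  have hint : ∫ t, (∑ i, ‖xfp i t - xs‖ ^ 2 + (n : ℝ) * ‖xlp t - xs‖ ^ 2) ∂P
      = Cst + (2*(n:ℝ)*ρ^2) * ∫ t, ‖V t‖ ^ 2 ∂P := by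
    rw [integral_congr_ae (Filter.Eventually.of_forall hpt)]
    have I2 : Integrable (fun t => (2*ρ) * ⟪c, V t⟫) P := hInnerInt.const_mul (2*ρ)
    have I1 : Integrable (fun t => Cst + (2*ρ) * ⟪c, V t⟫) P :=
      (integrable_const Cst).add I2
    have I3 : Integrable (fun t => (2*(n:ℝ)*ρ^2) * ‖V t‖ ^ 2) P :=
      hV2int.const_mul (2*(n:ℝ)*ρ^2)
    rw [integral_add I1 I3, integral_add (integrable_const Cst) I2, integral_const,
      integral_const_mul, integral_const_mul, integral_inner hVint, hVmean]
    simp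
  rw [hint]
  -- bound the variance term
  have hS : (0:ℝ) ≤ ∑ i, ‖xhat i - yhat‖ ^ 2 := by positivity
  have hvarbd : (2*(n:ℝ)*ρ^2) * ∫ t, ‖V t‖ ^ 2 ∂P
      ≤ (ρ^2 * ωav / 2) * ∑ i, ‖xhat i - yhat‖ ^ 2 := by
    have h0 : (0:ℝ) ≤ 2*(n:ℝ)*ρ^2 := by positivity
    calc (2*(n:ℝ)*ρ^2) * ∫ t, ‖V t‖ ^ 2 ∂P
        ≤ (2*(n:ℝ)*ρ^2) * ((ωav / (4 * (n:ℝ))) * ∑ i, ‖xhat i - yhat‖ ^ 2) :=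
          mul_le_mul_of_nonneg_left hVvar h0
      _ = (ρ^2 * ωav / 2) * ∑ i, ‖xhat i - yhat‖ ^ 2 := by field_simp; ring
  -- deterministic algebra
  have hcase : ∀ z : EuclideanSpace ℝ (Fin d), ∀ w : EuclideanSpace ℝ (Fin d),
      ‖(z - xs) - ρ • (z - xb)‖ ^ 2
        = ‖z - xs‖ ^ 2 - 2*ρ * ⟪z - xs, z - xb⟫ + ρ^2 * ‖z - xb‖ ^ 2 := by
    intro z w
    rw [norm_sub_sq_real, real_inner_smul_right, norm_smul, Real.norm_eq_abs, mul_pow, sq_abs]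
    ring
  have hCa : ∀ i, ‖a i‖ ^ 2 = ‖xhat i - xs‖ ^ 2 - 2*ρ * ⟪xhat i - xs, xhat i - xb⟫
      + ρ^2 * ‖xhat i - xb‖ ^ 2 := fun i => hcase (xhat i) 0
  have hCb : ‖b‖ ^ 2 = ‖yhat - xs‖ ^ 2 - 2*ρ * ⟪yhat - xs, yhat - xb⟫
      + ρ^2 * ‖yhat - xb‖ ^ 2 := hcase yhat 0
  -- P = Q
  have hzero : (∑ i, (xhat i - xb)) + (n:ℝ) • (yhat - xb) = 0 := by
    rw [Finset.sum_sub_distrib, Finset.sum_const, Finset.card_univ, Fintype.card_fin, hxb]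
    match_scalars <;> field_simp <;> ring
  have hPQ : (∑ i, ⟪xhat i - xs, xhat i - xb⟫) + (n:ℝ) * ⟪yhat - xs, yhat - xb⟫
      = (∑ i, ‖xhat i - xb‖ ^ 2) + (n:ℝ) * ‖yhat - xb‖ ^ 2 := by
    have h1 : ∀ z : EuclideanSpace ℝ (Fin d),
        ⟪z - xs, z - xb⟫ = ‖z - xb‖ ^ 2 + ⟪xb - xs, z - xb⟫ := by
      intro z
      have e : z - xs = (z - xb) + (xb - xs) := by abel
      rw [e, inner_add_left, real_inner_self_eq_norm_sq]
    have h2 : (∑ i, ⟪xb - xs, xhat i - xb⟫) + (n:ℝ) * ⟪xb - xs, yhat - xb⟫ = 0 := by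
      have : ⟪xb - xs, (∑ i, (xhat i - xb)) + (n:ℝ) • (yhat - xb)⟫ = (0:ℝ) := by
        rw [hzero, inner_zero_right]
      rwa [inner_add_right, inner_sum, real_inner_smul_right] at this
    calc (∑ i, ⟪xhat i - xs, xhat i - xb⟫) + (n:ℝ) * ⟪yhat - xs, yhat - xb⟫
        = (∑ i, (‖xhat i - xb‖ ^ 2 + ⟪xb - xs, xhat i - xb⟫))
          + (n:ℝ) * (‖yhat - xb‖ ^ 2 + ⟪xb - xs, yhat - xb⟫) := by
          rw [Finset.sum_congr rfl (fun i _ => h1 (xhat i)), h1 yhat]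
      _ = (∑ i, ‖xhat i - xb‖ ^ 2) + (n:ℝ) * ‖yhat - xb‖ ^ 2
          + ((∑ i, ⟪xb - xs, xhat i - xb⟫) + (n:ℝ) * ⟪xb - xs, yhat - xb⟫) := by
          rw [Finset.sum_add_distrib]; ring
      _ = (∑ i, ‖xhat i - xb‖ ^ 2) + (n:ℝ) * ‖yhat - xb‖ ^ 2 := by rw [h2]; ring
  -- S ≤ 2 Q
  have hsumu : (∑ i, (xhat i - yhat)) = (2*(n:ℝ)) • (xb - yhat) := by
    rw [Finset.sum_sub_distrib, Finset.sum_const, Finset.card_univ, Fintype.card_fin, hxb]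
    match_scalars <;> field_simp <;> ring
  have hSQ : (∑ i, ‖xhat i - yhat‖ ^ 2)
      ≤ 2 * ((∑ i, ‖xhat i - xb‖ ^ 2) + (n:ℝ) * ‖yhat - xb‖ ^ 2) := by
    set w : EuclideanSpace ℝ (Fin d) := xb - yhat with hw
    have hq1 : ∀ i, ‖xhat i - xb‖ ^ 2
        = ‖xhat i - yhat‖ ^ 2 - 2 * ⟪xhat i - yhat, w⟫ + ‖w‖ ^ 2 := by
      intro i
      have e : xhat i - xb = (xhat i - yhat) - w := by rw [hw]; abel
      rw [e, norm_sub_sq_real]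
    have hq2 : ‖yhat - xb‖ ^ 2 = ‖w‖ ^ 2 := by
      have e : yhat - xb = -w := by rw [hw]; abel
      rw [e, norm_neg]
    have hiw : (∑ i, ⟪xhat i - yhat, w⟫) = 2*(n:ℝ) * ‖w‖ ^ 2 := by
      rw [← sum_inner, hsumu, real_inner_smul_left, real_inner_self_eq_norm_sq]
    have hcs : ‖∑ i, (xhat i - yhat)‖ ^ 2 ≤ (n:ℝ) * ∑ i, ‖xhat i - yhat‖ ^ 2 := by
      calc ‖∑ i, (xhat i - yhat)‖ ^ 2 ≤ (∑ i, ‖xhat i - yhat‖) ^ 2 := by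
            have hle : ‖∑ i, (xhat i - yhat)‖ ≤ ∑ i, ‖xhat i - yhat‖ :=
              norm_sum_le Finset.univ (fun i => xhat i - yhat)
            exact pow_le_pow_left₀ (norm_nonneg _) hle 2
        _ ≤ (n:ℝ) * ∑ i, ‖xhat i - yhat‖ ^ 2 := by
            have := sq_sum_le_card_mul_sum_sq
              (s := Finset.univ) (f := fun i => ‖xhat i - yhat‖)
            simpa using this
    have hnw : ‖∑ i, (xhat i - yhat)‖ ^ 2 = (2*(n:ℝ))^2 * ‖w‖ ^ 2 := by
      rw [hsumu, norm_smul, Real.norm_eq_abs, mul_pow, sq_abs]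
    have hQ : (∑ i, ‖xhat i - xb‖ ^ 2) + (n:ℝ) * ‖yhat - xb‖ ^ 2
        = (∑ i, ‖xhat i - yhat‖ ^ 2) - 2*(n:ℝ) * ‖w‖ ^ 2 := by
      rw [Finset.sum_congr rfl (fun i _ => hq1 i), hq2, Finset.sum_add_distrib,
        Finset.sum_sub_distrib, ← Finset.mul_sum, hiw, Finset.sum_const,
        Finset.card_univ, Fintype.card_fin]
      push_cast
      ring
    have h4 : (4*(n:ℝ)) * ‖w‖^2 ≤ ∑ i, ‖xhat i - yhat‖ ^ 2 := by
      have h : (2*(n:ℝ))^2 * ‖w‖ ^ 2 ≤ (n:ℝ) * ∑ i, ‖xhat i - yhat‖ ^ 2 := hnw ▸ hcs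
      have h5 : (n:ℝ) * ((4*(n:ℝ)) * ‖w‖^2) ≤ (n:ℝ) * ∑ i, ‖xhat i - yhat‖ ^ 2 := by
        linarith [h]
      exact le_of_mul_le_mul_left h5 hnpos
    rw [hQ]
    linarith [h4]
  -- put everything together
  have e1 : ∑ i, ‖a i‖ ^ 2 = (∑ i, ‖xhat i - xs‖ ^ 2)
      - 2*ρ * (∑ i, ⟪xhat i - xs, xhat i - xb⟫)
      + ρ^2 * (∑ i, ‖xhat i - xb‖ ^ 2) := by
    rw [Finset.sum_congr rfl (fun i _ => hCa i), Finset.sum_add_distrib,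
      Finset.sum_sub_distrib, ← Finset.mul_sum, ← Finset.mul_sum]
  have hCexp : Cst = (∑ i, ‖xhat i - xs‖ ^ 2 + (n:ℝ) * ‖yhat - xs‖ ^ 2)
      - (2*ρ - ρ^2) * ((∑ i, ‖xhat i - xb‖ ^ 2) + (n:ℝ) * ‖yhat - xb‖ ^ 2) := by
    rw [hCst, e1, hCb]
    linear_combination (-(2*ρ)) * hPQ
  set S := ∑ i, ‖xhat i - yhat‖ ^ 2 with hSdef
  set Q1 := ∑ i, ‖xhat i - xb‖ ^ 2 with hQ1def
  set A1 := ∑ i, ‖xhat i - xs‖ ^ 2 with hA1def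
  set I := ∫ t, ‖V t‖ ^ 2 ∂P with hIdef
  have hkey : 0 ≤ ρ^2 * ωav * (2 * (Q1 + (n:ℝ) * ‖yhat - xb‖ ^ 2) - S) :=
    mul_nonneg (mul_nonneg (sq_nonneg ρ) hωav) (sub_nonneg.mpr hSQ)
  linarith [hvarbd, hCexp, hkey]
end

section
/- Explicit rate bound with the tuned parameters (core of the iteration-complexity claim): let 0 < μ ≤ L, κ = L/μ, ω ≥ 0, ω_av ≥ 0, and set γ = 1/L, χ = ρ = 1/(1 + ω_av), and p = min(√((1 + ω_av)(1 + ω)/κ), 1). Then (i) p ∈ (0,1] and 2ρ − ρ²(1 + ω_av) − χ = 0, so the conditions of Theorem 1 are met; and (ii) the rate τ = max((1 − γμ)², (1 − γL)², 1 − p²χ/(1 + 2ω)) satisfies τ ≤ 1 − (1/2)·min(1/κ, 1/((1 + ω_av)(1 + ω))). -/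
set_option maxHeartbeats 1000000 in
/-- Explicit rate bound with the tuned parameters of LoCoDL: with `γ = 1/L`,
`χ = ρ = 1/(1 + ω_av)` and `p = min(√((1 + ω_av)(1 + ω)/κ), 1)`, the conditions of
Theorem 1 are met and the rate `τ` satisfies
`τ ≤ 1 - (1/2) min(1/κ, 1/((1 + ω_av)(1 + ω)))`. -/
theorem stmt15 (L mu ω ωav : ℝ) (hmu : 0 < mu) (hmuL : mu ≤ L)
    (hω : 0 ≤ ω) (hωav : 0 ≤ ωav)
    (κ γ χ ρ p : ℝ)
    (hκ : κ = L / mu) (hγ : γ = 1 / L)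
    (hχ : χ = 1 / (1 + ωav)) (hρ : ρ = 1 / (1 + ωav))
    (hp : p = min (Real.sqrt ((1 + ωav) * (1 + ω) / κ)) 1) :
    -- (i) the conditions of Theorem 1 are met
    (0 < p ∧ p ≤ 1 ∧ 2 * ρ - ρ ^ 2 * (1 + ωav) - χ = 0) ∧
    -- (ii) explicit bound on the rate
    max (max ((1 - γ * mu) ^ 2) ((1 - γ * L) ^ 2)) (1 - p ^ 2 * χ / (1 + 2 * ω)) ≤
      1 - (1 / 2) * min (1 / κ) (1 / ((1 + ωav) * (1 + ω))) := by
  have hL : 0 < L := lt_of_lt_of_le hmu hmuL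
  have hκ1 : 1 ≤ κ := by rw [hκ]; exact (one_le_div hmu).mpr hmuL
  have hκ0 : 0 < κ := lt_of_lt_of_le one_pos hκ1
  have hav : (0:ℝ) < 1 + ωav := by linarith
  have hw1 : (0:ℝ) < 1 + ω := by linarith
  have hw2 : (0:ℝ) < 1 + 2 * ω := by linarith
  have ha : (0:ℝ) < (1 + ωav) * (1 + ω) := mul_pos hav hw1
  have harg : 0 < (1 + ωav) * (1 + ω) / κ := div_pos ha hκ0
  have hs : 0 < Real.sqrt ((1 + ωav) * (1 + ω) / κ) := Real.sqrt_pos.mpr harg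
  have hp0 : 0 < p := by rw [hp]; exact lt_min hs one_pos
  have hp1 : p ≤ 1 := by rw [hp]; exact min_le_right _ _
  refine ⟨⟨hp0, hp1, ?_⟩, ?_⟩
  · rw [hρ, hχ]; field_simp; ring
  · -- bound each term of the max
    set m := min (1 / κ) (1 / ((1 + ωav) * (1 + ω))) with hm
    have hm1 : m ≤ 1 / κ := min_le_left _ _
    have hm2 : m ≤ 1 / ((1 + ωav) * (1 + ω)) := min_le_right _ _
    clear_value m
    have hγL : γ * L = 1 := by rw [hγ]; field_simp
    have hγmu : γ * mu = mu / L := by rw [hγ]; ring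
    have hinvκ : 1 / κ = mu / L := by rw [hκ]; field_simp
    have hmuL' : mu / L ≤ 1 := (div_le_one hL).mpr hmuL
    have hmuL0 : 0 < mu / L := div_pos hmu hL
    refine max_le (max_le ?_ ?_) ?_
    · -- (1 - γ mu)^2
      rw [hγmu]
      nlinarith [hm1, hinvκ, hmuL', hmuL0]
    · rw [hγL]; simp
      nlinarith [hm1, hinvκ, hmuL', hmuL0]
    · -- third term
      rw [hχ, hp]
      have key2 : (1 + ωav) * (1 + 2 * ω) ≤ 2 * ((1 + ωav) * (1 + ω)) := by nlinarith
      rcases le_or_gt (Real.sqrt ((1 + ωav) * (1 + ω) / κ)) 1 with h | h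
      · rw [min_eq_left h, Real.sq_sqrt harg.le]
        have key : (1 + ωav) * (1 + ω) / κ * (1 / (1 + ωav)) / (1 + 2 * ω)
            = (1 + ω) / ((1 + 2 * ω) * κ) := by field_simp
        rw [key]
        have h2 : (1 / 2) * (1 / κ) ≤ (1 + ω) / ((1 + 2 * ω) * κ) := by
          rw [show (1:ℝ)/2 * (1/κ) = 1/(2*κ) by ring,
            div_le_div_iff₀ (by positivity) (by positivity)]
          nlinarith
        have h1 : (1 / 2) * m ≤ (1 / 2) * (1 / κ) := by linarith
        linarith
      · rw [min_eq_right h.le, one_pow, one_mul, div_div]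
        have h2 : (1 / 2) * (1 / ((1 + ωav) * (1 + ω))) ≤ 1 / ((1 + ωav) * (1 + 2 * ω)) := by
          rw [show (1:ℝ)/2 * (1/((1 + ωav)*(1 + ω))) = 1/(2*((1 + ωav)*(1 + ω))) by
              rw [div_mul_div_comm, one_mul],
            div_le_div_iff₀ (by positivity) (by positivity)]
          nlinarith [key2]
        have h1 : (1 / 2) * m ≤ (1 / 2) * (1 / ((1 + ωav) * (1 + ω))) := by linarith
        linarith
end
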